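/- Let n ≥ 2 and let 1 ≤ d_1 ≤ d_2 ≤ … ≤ d_n be integers with d_n > d_1 + … + d_{n-1}, and set e = d_1 + … + d_{n-1}. Then the set of indices i at which the coefficient of t^i in ∏_{i=1}^n f_{d_i} attains its maximum value is exactly {e, e+1, …, d_n}; in particular there are exactly d_n − (d_1 + … + d_{n-1}) + 1 indices attaining the maximal coefficient. -/

import Mathlib

open Polynomial

/-- `fpoly d` is the polynomial `f_d = 1 + t + t^2 + ⋯ + t^d`. -/
noncomputable def fpoly (d : ℕ) : Polynomial ℝ :=
  ∑ i ∈ Finset.range (d + 1), Polynomial.X ^ i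

/-- A sequence `a_0, …, a_d` is strictly unimodal if, for `d = 2m`,
`a_0 < a_1 < ⋯ < a_m > a_{m+1} > ⋯ > a_{2m}`, and for `d = 2m+1`,
`a_0 < a_1 < ⋯ < a_m = a_{m+1} > a_{m+2} > ⋯ > a_{2m+1}`. -/
def StrictlyUnimodalSeq (d : ℕ) (a : ℕ → ℝ) : Prop :=
  (∀ i, i < d / 2 → a i < a (i + 1)) ∧
  (Odd d → a (d / 2) = a (d / 2 + 1)) ∧
  (∀ i, (d + 1) / 2 ≤ i → i < d → a (i + 1) < a i)

/-- The sequence `a` strictly increases on `[0, e]`, is constant on `[e, p]`,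
and strictly decreases on `[p, D]`. -/
def IncConstDec (a : ℕ → ℝ) (e p D : ℕ) : Prop :=
  (∀ i, i < e → a i < a (i + 1)) ∧
  (∀ i, e ≤ i → i < p → a i = a (i + 1)) ∧
  (∀ i, p ≤ i → i < D → a (i + 1) < a i)

lemma fpoly_coeff (d k : ℕ) : (fpoly d).coeff k = if k ≤ d then 1 else 0 := by
  simp [fpoly, Polynomial.coeff_X_pow, Nat.lt_succ_iff, eq_comm]

/-- `p` has positive coefficients up to degree `a` and zero above. -/
def GoodAt (p : Polynomial ℝ) (a : ℕ) : Prop :=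
  (∀ k ≤ a, 0 < p.coeff k) ∧ ∀ k, a < k → p.coeff k = 0

lemma GoodAt.nonneg {p : Polynomial ℝ} {a : ℕ} (h : GoodAt p a) (k : ℕ) :
    0 ≤ p.coeff k := by
  rcases le_or_gt k a with hk | hk
  · exact (h.1 k hk).le
  · rw [h.2 k hk]

lemma goodAt_fpoly (d : ℕ) : GoodAt (fpoly d) d := by
  constructor
  · intro k hk; simp [fpoly_coeff, hk]
  · intro k hk; simp [fpoly_coeff, hk.not_ge]

lemma GoodAt.mul {p q : Polynomial ℝ} {a b : ℕ} (hp : GoodAt p a) (hq : GoodAt q b) :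
    GoodAt (p * q) (a + b) := by
  constructor
  · intro k hk
    rw [Polynomial.coeff_mul]
    apply Finset.sum_pos'
    · intro x _
      exact mul_nonneg (hp.nonneg x.1) (hq.nonneg x.2)
    · refine ⟨(min a k, k - min a k), ?_, ?_⟩
      · rw [Finset.HasAntidiagonal.mem_antidiagonal]; omega
      · exact mul_pos (hp.1 _ (min_le_left _ _)) (hq.1 _ (by omega))
  · intro k hk
    rw [Polynomial.coeff_mul]
    apply Finset.sum_eq_zero
    intro x hx
    rw [Finset.HasAntidiagonal.mem_antidiagonal] at hx
    rcases le_or_gt x.1 a with h1 | h1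
    · rw [hq.2 x.2 (by omega), mul_zero]
    · rw [hp.2 x.1 h1, zero_mul]

lemma goodAt_prod (d : ℕ → ℕ) (m : ℕ) :
    GoodAt (∏ i ∈ Finset.range m, fpoly (d i)) (∑ i ∈ Finset.range m, d i) := by
  induction m with
  | zero =>
      simp only [Finset.range_zero, Finset.prod_empty, Finset.sum_empty]
      constructor
      · intro k hk
        interval_cases k
        simp
      · intro k hk
        simp [Polynomial.coeff_one]
        omega
  | succ m ih =>
      rw [Finset.prod_range_succ, Finset.sum_range_succ]
      exact ih.mul (goodAt_fpoly _)

/-- If `n ≥ 2`, `1 ≤ d_1 ≤ ⋯ ≤ d_n` and `d_n > e := d_1 + ⋯ + d_{n-1}`, then the set of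
indices at which the coefficients of `∏_{i=1}^n f_{d_i}` attain their maximum is exactly
`{e, e+1, …, d_n}`; in particular there are exactly `d_n - e + 1` such indices. -/
theorem prod_fpoly_maximizers (n : ℕ) (hn : 2 ≤ n) (d : ℕ → ℕ)
    (hd1 : ∀ i < n, 1 ≤ d i) (hmono : ∀ i j, i ≤ j → j < n → d i ≤ d j)
    (h : (∑ i ∈ Finset.range (n - 1), d i) < d (n - 1)) :
    {j : ℕ | ∀ i, (∏ i ∈ Finset.range n, fpoly (d i)).coeff i ≤
        (∏ i ∈ Finset.range n, fpoly (d i)).coeff j} =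
      Set.Icc (∑ i ∈ Finset.range (n - 1), d i) (d (n - 1)) ∧
    {j : ℕ | ∀ i, (∏ i ∈ Finset.range n, fpoly (d i)).coeff i ≤
        (∏ i ∈ Finset.range n, fpoly (d i)).coeff j}.ncard =
      d (n - 1) - (∑ i ∈ Finset.range (n - 1), d i) + 1 := by
  obtain ⟨m, rfl⟩ : ∃ m, n = m + 1 := ⟨n - 1, by omega⟩
  simp only [Nat.add_sub_cancel] at h ⊢
  rw [Finset.prod_range_succ]
  set e := ∑ i ∈ Finset.range m, d i with he
  set D := d m with hD
  set Q := ∏ i ∈ Finset.range m, fpoly (d i) with hQ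
  have hQgood : GoodAt Q e := goodAt_prod d m
  set P := Q * fpoly D with hP
  set S : ℝ := ∑ i ∈ Finset.range (e + 1), Q.coeff i with hS
  have hcoeff : ∀ j, P.coeff j =
      ∑ i ∈ Finset.range (j + 1), Q.coeff i * (if j - i ≤ D then 1 else 0) := by
    intro j
    rw [hP, Polynomial.coeff_mul, Finset.Nat.sum_antidiagonal_eq_sum_range_succ_mk]
    exact Finset.sum_congr rfl fun i _ => by rw [fpoly_coeff]
  have hmid : ∀ j, e ≤ j → j ≤ D → P.coeff j = S := by
    intro j h1 h2
    rw [hcoeff j, hS]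
    have hsub : Finset.range (e + 1) ⊆ Finset.range (j + 1) :=
      Finset.range_subset_range.mpr (by omega)
    rw [← Finset.sum_subset hsub ?_]
    · refine Finset.sum_congr rfl fun i hi => ?_
      rw [if_pos (by omega), mul_one]
    · intro i hi hni
      simp only [Finset.mem_range] at hi hni
      rw [hQgood.2 i (by omega), zero_mul]
  have hlow : ∀ j, j < e → P.coeff j < S := by
    intro j hj
    rw [hcoeff j, hS]
    have : ∀ i ∈ Finset.range (j + 1),
        Q.coeff i * (if j - i ≤ D then (1:ℝ) else 0) = Q.coeff i := by
      intro i hi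
      rw [if_pos (by omega), mul_one]
    rw [Finset.sum_congr rfl this]
    exact Finset.sum_lt_sum_of_subset (Finset.range_subset_range.mpr (by omega))
      (Finset.mem_range.mpr (by omega)) (by simp; omega) (hQgood.1 e le_rfl)
      (fun k _ _ => hQgood.nonneg k)
  have hhigh : ∀ j, D < j → P.coeff j < S := by
    intro j hj
    have hSj : S = ∑ i ∈ Finset.range (j + 1), Q.coeff i := by
      rw [hS]
      refine Finset.sum_subset (Finset.range_subset_range.mpr (by omega)) ?_
      intro i hi hni
      simp only [Finset.mem_range] at hi hni
      exact hQgood.2 i (by omega)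
    rw [hcoeff j, hSj]
    refine Finset.sum_lt_sum (fun i _ => ?_) ⟨0, Finset.mem_range.mpr (by omega), ?_⟩
    · split
      · rw [mul_one]
      · rw [mul_zero]; exact hQgood.nonneg i
    · rw [if_neg (by omega), mul_zero]
      exact hQgood.1 0 (Nat.zero_le e)
  have hset : {j : ℕ | ∀ i, P.coeff i ≤ P.coeff j} = Set.Icc e D := by
    ext j
    simp only [Set.mem_setOf_eq, Set.mem_Icc]
    constructor
    · intro hj
      by_contra hc
      push_neg at hc
      have hje : P.coeff j < S := by
        rcases lt_or_ge j e with h1 | h1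
        · exact hlow j h1
        · exact hhigh j (hc h1)
      have h2 : S ≤ P.coeff j := by
        have := hj e
        rwa [hmid e le_rfl h.le] at this
      linarith
    · rintro ⟨h1, h2⟩ i
      rw [hmid j h1 h2]
      rcases lt_or_ge i e with hi | hi
      · exact (hlow i hi).le
      rcases le_or_gt i D with hi2 | hi2
      · exact (hmid i hi hi2).le
      · exact (hhigh i hi2).le
  refine ⟨hset, ?_⟩
  rw [hset, ← Finset.coe_Icc, Set.ncard_coe_finset, Nat.card_Icc]
  omega
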